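/- The function f defined on [0,1] by f(x) = h₂((1+√x)/2) is concave on [0,1]. -/

import Mathlib

open Real Set

/-- Binary entropy function (base-2 logarithm), with the convention `0 * log 0 = 0`. -/
noncomputable def h2 (p : ℝ) : ℝ := -(p * Real.logb 2 p) - (1 - p) * Real.logb 2 (1 - p)

/-- Key inequality: `log(1+s) - log(1-s) ≤ 2s/(1-s²)` for `s ∈ (0,1)`. -/
lemma key_ineq {s : ℝ} (h0 : 0 < s) (h1 : s < 1) :
    Real.log (1 + s) - Real.log (1 - s) ≤ 2 * s / (1 - s ^ 2) := by
  set F : ℝ → ℝ := fun t => 2 * t / (1 - t ^ 2) - (Real.log (1 + t) - Real.log (1 - t)) with hF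
  have hderiv : ∀ t ∈ Ioo (0 : ℝ) 1, HasDerivAt F
      ((2 * 1 * (1 - t ^ 2) - 2 * t * (-(2 * t))) / (1 - t ^ 2) ^ 2 -
        ((1 + t)⁻¹ * (0 + 1) - (1 - t)⁻¹ * (0 - 1))) t := by
    intro t ht
    have ht2 : (1 : ℝ) - t ^ 2 ≠ 0 := by nlinarith [ht.1, ht.2]
    have h1t : (1 : ℝ) + t ≠ 0 := by linarith [ht.1]
    have h1t' : (1 : ℝ) - t ≠ 0 := by linarith [ht.2]
    have hden : HasDerivAt (fun t : ℝ => 1 - t ^ 2) (-(2 * t)) t := by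
      simpa using (hasDerivAt_pow 2 t).const_sub 1
    have hA : HasDerivAt (fun t : ℝ => 2 * t / (1 - t ^ 2))
        ((2 * 1 * (1 - t ^ 2) - 2 * t * (-(2 * t))) / (1 - t ^ 2) ^ 2) t :=
      ((hasDerivAt_id t).const_mul 2).div hden ht2
    have hB : HasDerivAt (fun t : ℝ => Real.log (1 + t)) ((1 + t)⁻¹ * (0 + 1)) t :=
      (Real.hasDerivAt_log h1t).comp t ((hasDerivAt_const t 1).add (hasDerivAt_id t))
    have hC : HasDerivAt (fun t : ℝ => Real.log (1 - t)) ((1 - t)⁻¹ * (0 - 1)) t :=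
      (Real.hasDerivAt_log h1t').comp t ((hasDerivAt_const t 1).sub (hasDerivAt_id t))
    exact hA.sub (hB.sub hC)
  have hmono : MonotoneOn F (Ico (0 : ℝ) 1) := by
    apply monotoneOn_of_deriv_nonneg (convex_Ico 0 1)
    · apply ContinuousOn.sub
      · apply ContinuousOn.div (continuous_const.mul continuous_id).continuousOn
          (continuous_const.sub (continuous_pow 2)).continuousOn
        intro t ht
        simp only [Pi.sub_apply]
        nlinarith [ht.1, ht.2]
      · apply ContinuousOn.sub
        · exact ContinuousOn.log (continuous_const.add continuous_id).continuousOn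
            (fun t ht => ne_of_gt (by linarith [ht.1]))
        · exact ContinuousOn.log (continuous_const.sub continuous_id).continuousOn
            (fun t ht => ne_of_gt (by linarith [ht.2]))
    · rw [interior_Ico]
      exact fun t ht => (hderiv t ht).differentiableAt.differentiableWithinAt
    · rw [interior_Ico]
      intro t ht
      rw [(hderiv t ht).deriv]
      have ht2 : (0 : ℝ) < 1 - t ^ 2 := by nlinarith [ht.1, ht.2]
      have h1t : (0 : ℝ) < 1 + t := by linarith [ht.1]
      have h1t' : (0 : ℝ) < 1 - t := by linarith [ht.2]
      have heq : (2 * 1 * (1 - t ^ 2) - 2 * t * (-(2 * t))) / (1 - t ^ 2) ^ 2 -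
          ((1 + t)⁻¹ * (0 + 1) - (1 - t)⁻¹ * (0 - 1)) = 4 * t ^ 2 / (1 - t ^ 2) ^ 2 := by
        field_simp
        ring
      rw [heq]
      positivity
  have h0' : F 0 ≤ F s := hmono ⟨le_refl 0, one_pos⟩ ⟨h0.le, h1⟩ h0.le
  have hF0 : F 0 = 0 := by simp [hF]
  rw [hF0] at h0'
  simp only [hF] at h0'
  linarith

lemma h2_eq (p : ℝ) : h2 p = Real.binEntropy p / Real.log 2 := by
  simp only [h2, Real.binEntropy, Real.logb, Real.log_inv]
  ring

theorem stmt8 :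
    ConcaveOn ℝ (Set.Icc (0 : ℝ) 1) (fun x => h2 ((1 + Real.sqrt x) / 2)) := by
  have hl2 : (0 : ℝ) < Real.log 2 := Real.log_pos (by norm_num)
  have hfun : (fun x => h2 ((1 + Real.sqrt x) / 2)) =
      fun x => Real.binEntropy ((1 + Real.sqrt x) / 2) / Real.log 2 :=
    funext fun x => h2_eq _
  rw [hfun]
  set f' : ℝ → ℝ := fun x =>
    (Real.log (1 - Real.sqrt x) - Real.log (1 + Real.sqrt x)) /
      (Real.log 2 * (4 * Real.sqrt x)) with hf'def
  -- facts on the interior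
  have hfacts : ∀ x ∈ Set.Ioo (0 : ℝ) 1,
      0 < Real.sqrt x ∧ Real.sqrt x < 1 ∧ Real.sqrt x ^ 2 = x := by
    intro x hx
    refine ⟨Real.sqrt_pos.2 hx.1, ?_, Real.sq_sqrt hx.1.le⟩
    calc Real.sqrt x < Real.sqrt 1 := by
          exact Real.sqrt_lt_sqrt hx.1.le hx.2
      _ = 1 := Real.sqrt_one
  -- first derivative
  have hd1 : ∀ x ∈ Set.Ioo (0 : ℝ) 1,
      HasDerivAt (fun x => Real.binEntropy ((1 + Real.sqrt x) / 2) / Real.log 2) (f' x) x := by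
    intro x hx
    obtain ⟨hs0, hs1, hsq⟩ := hfacts x hx
    have hsne : Real.sqrt x ≠ 0 := hs0.ne'
    have hp : HasDerivAt (fun x => (1 + Real.sqrt x) / 2) ((0 + 1 / (2 * Real.sqrt x)) / 2) x :=
      ((hasDerivAt_const x 1).add (Real.hasDerivAt_sqrt hx.1.ne')).div_const 2
    have hp0 : (1 + Real.sqrt x) / 2 ≠ 0 := by positivity
    have hp1 : (1 + Real.sqrt x) / 2 ≠ 1 := by intro h; nlinarith [hs1]
    have hb := (Real.hasDerivAt_binEntropy hp0 hp1).comp x hp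
    have hb2 := hb.div_const (Real.log 2)
    convert hb2 using 1
    case e'_4 => rfl
    case e'_5 => rfl
    case e'_8 => rfl
    have h1mp : 1 - (1 + Real.sqrt x) / 2 = (1 - Real.sqrt x) / 2 := by ring
    simp only [hf'def]
    rw [h1mp, Real.log_div (by linarith) two_ne_zero, Real.log_div (by linarith) two_ne_zero]
    rw [div_eq_div_iff (by simp [hsne, hl2.ne']) hl2.ne']
    field_simp
    ring
  -- second derivative
  set f'' : ℝ → ℝ := fun x =>
    (((1 - Real.sqrt x)⁻¹ * (0 - 1 / (2 * Real.sqrt x)) -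
        (1 + Real.sqrt x)⁻¹ * (0 + 1 / (2 * Real.sqrt x))) * (Real.log 2 * (4 * Real.sqrt x)) -
      (Real.log (1 - Real.sqrt x) - Real.log (1 + Real.sqrt x)) *
        (Real.log 2 * (4 * (1 / (2 * Real.sqrt x))))) /
      (Real.log 2 * (4 * Real.sqrt x)) ^ 2 with hf''def
  have hd2 : ∀ x ∈ Set.Ioo (0 : ℝ) 1, HasDerivAt f' (f'' x) x := by
    intro x hx
    obtain ⟨hs0, hs1, hsq⟩ := hfacts x hx
    set s := Real.sqrt x
    have hs : HasDerivAt Real.sqrt (1 / (2 * s)) x := Real.hasDerivAt_sqrt hx.1.ne'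
    have hN1 : HasDerivAt (fun x => Real.log (1 - Real.sqrt x))
        ((1 - s)⁻¹ * (0 - 1 / (2 * s))) x :=
      (Real.hasDerivAt_log (by linarith)).comp x ((hasDerivAt_const x 1).sub hs)
    have hN2 : HasDerivAt (fun x => Real.log (1 + Real.sqrt x))
        ((1 + s)⁻¹ * (0 + 1 / (2 * s))) x :=
      (Real.hasDerivAt_log (by linarith)).comp x ((hasDerivAt_const x 1).add hs)
    have hD : HasDerivAt (fun x => Real.log 2 * (4 * Real.sqrt x))
        (Real.log 2 * (4 * (1 / (2 * s)))) x := ((hs.const_mul 4).const_mul (Real.log 2))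
    have hDne : Real.log 2 * (4 * s) ≠ 0 := by positivity
    exact (hN1.sub hN2).div hD hDne
  have hd2nonpos : ∀ x ∈ Set.Ioo (0 : ℝ) 1, f'' x ≤ 0 := by
    intro x hx
    obtain ⟨hs0, hs1, hsq⟩ := hfacts x hx
    set s := Real.sqrt x
    have hkey := key_ineq hs0 hs1
    have h1s : (0 : ℝ) < 1 - s := by linarith
    have h1s' : (0 : ℝ) < 1 + s := by linarith
    have hs2 : (0 : ℝ) < 1 - s ^ 2 := by nlinarith
    rw [hf''def]
    apply div_nonpos_of_nonpos_of_nonneg _ (sq_nonneg _)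
    have heq : ((1 - s)⁻¹ * (0 - 1 / (2 * s)) - (1 + s)⁻¹ * (0 + 1 / (2 * s))) *
          (Real.log 2 * (4 * s)) -
        (Real.log (1 - s) - Real.log (1 + s)) * (Real.log 2 * (4 * (1 / (2 * s)))) =
        Real.log 2 * (2 / s) *
          ((Real.log (1 + s) - Real.log (1 - s)) - 2 * s / (1 - s ^ 2)) := by
      field_simp
      ring
    rw [heq]
    apply mul_nonpos_of_nonneg_of_nonpos (by positivity)
    linarith
  refine concaveOn_of_hasDerivWithinAt2_nonpos (f' := f') (f'' := f'') (convex_Icc 0 1) ?_ ?_ ?_ ?_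
  · exact ((Real.binEntropy_continuous.comp
      ((continuous_const.add Real.continuous_sqrt).div_const 2)).div_const _).continuousOn
  · rw [interior_Icc]
    exact fun x hx => (hd1 x hx).hasDerivWithinAt
  · rw [interior_Icc]
    exact fun x hx => (hd2 x hx).hasDerivWithinAt
  · rw [interior_Icc]
    exact hd2nonpos
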